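/- Fix an integer k ≥ 1 and let d' := ⌈log₂ k⌉. Then the amortized U-MMR membership-proof size of the k-th most recent item equals d' + 2k/2^{d'} − 1; that is, the sequence N ↦ (1/N)·Σ_{n=k}^{k+N−1} f(k,n) tends to d' + 2k/2^{d'} − 1 as N → ∞. -/

import Mathlib

open Filter

/-- Height of the mountain of the U-MMR structure on `n` leaves containing the `k`-th
most recently appended leaf: the least `s ≥ 0` such that `n mod 2^(s+1) ≥ k`. This is
the size in hashes of that leaf's U-MMR membership proof. -/
noncomputable def ummrHeight (k n : ℕ) : ℕ := sInf {s : ℕ | k ≤ n % 2 ^ (s + 1)}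

namespace UmmrAux

open Finset

lemma mod_le_mod_pow (k n s t : ℕ) (hst : s ≤ t) (h : k ≤ n % 2 ^ (s + 1)) :
    k ≤ n % 2 ^ (t + 1) := by
  induction t, hst using Nat.le_induction with
  | base => exact h
  | succ t ht ih =>
    have hdvd : (2 : ℕ) ^ (t + 1) ∣ 2 ^ (t + 1 + 1) := pow_dvd_pow 2 (by omega)
    calc k ≤ n % 2 ^ (t + 1) := ih
    _ = (n % 2 ^ (t + 1 + 1)) % 2 ^ (t + 1) := (Nat.mod_mod_of_dvd n hdvd).symm
    _ ≤ n % 2 ^ (t + 1 + 1) := Nat.mod_le _ _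

lemma height_eq (k n T : ℕ) (hT : k ≤ n % 2 ^ (T + 1)) :
    ummrHeight k n = ((range T).filter (fun s => n % 2 ^ (s + 1) < k)).card := by
  have hne : {s : ℕ | k ≤ n % 2 ^ (s + 1)}.Nonempty := ⟨T, hT⟩
  have hmem : k ≤ n % 2 ^ (sInf {s : ℕ | k ≤ n % 2 ^ (s + 1)} + 1) := Nat.sInf_mem hne
  set s₀ := sInf {s : ℕ | k ≤ n % 2 ^ (s + 1)} with hs₀
  have h₀T : s₀ ≤ T := Nat.sInf_le hT
  have hfe : (range T).filter (fun s => n % 2 ^ (s + 1) < k) = range s₀ := by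
    ext s
    simp only [mem_filter, mem_range]
    constructor
    · rintro ⟨hsT, hlt⟩
      by_contra hs
      push_neg at hs
      exact absurd (mod_le_mod_pow k n s₀ s hs hmem) (by omega)
    · intro hs
      refine ⟨lt_of_lt_of_le hs h₀T, ?_⟩
      by_contra hge
      push_neg at hge
      have : s₀ ≤ s := Nat.sInf_le hge
      omega
  rw [ummrHeight, ← hs₀, hfe, card_range]

lemma countF (k m : ℕ) (hm : 0 < m) (M : ℕ) :
    ((range M).filter (fun n => n % m < k)).card
      = M / m * min k m + min (M % m) k := by
  induction M with
  | zero => simp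
  | succ M ih =>
    rw [range_add_one, filter_insert]
    have hr : M % m < m := Nat.mod_lt M hm
    have hM : m * (M / m) + M % m = M := Nat.div_add_mod M m
    set q := M / m with hq
    set r := M % m with hrdef
    rcases Nat.lt_or_ge (r + 1) m with h | h
    · have hM1 : M + 1 = m * q + (r + 1) := by rw [← hM]; ring
      have e1 : (M + 1) % m = r + 1 := by
        rw [hM1, Nat.mul_add_mod, Nat.mod_eq_of_lt h]
      have e2 : (M + 1) / m = q := by
        rw [hM1, Nat.mul_add_div hm, Nat.div_eq_of_lt h, add_zero]
      rw [e1, e2]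
      by_cases hlt : r < k
      · rw [if_pos hlt, card_insert_of_notMem (by simp), ih,
          show min (r + 1) k = min r k + 1 by omega]
        ring
      · rw [if_neg hlt, ih, show min (r + 1) k = min r k by omega]
    · have hrm : r + 1 = m := by omega
      have hM1 : M + 1 = m * (q + 1) := by rw [← hM, ← hrm]; ring
      have e1 : (M + 1) % m = 0 := by rw [hM1, Nat.mul_mod_right]
      have e2 : (M + 1) / m = q + 1 := by rw [hM1, Nat.mul_div_cancel_left _ hm]
      rw [e1, e2]
      by_cases hlt : r < k
      · rw [if_pos hlt, card_insert_of_notMem (by simp), ih,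
          show min (0 : ℕ) k = 0 by omega, show min k m = r + 1 by omega,
          show min r k = r by omega]
        ring
      · rw [if_neg hlt, ih, show min (0 : ℕ) k = 0 by omega,
          show min k m = k by omega, show min r k = k by omega]
        ring

lemma countIco (p : ℕ → Prop) [DecidablePred p] (a b : ℕ) (hab : a ≤ b) :
    ((Ico a b).filter p).card + ((range a).filter p).card
      = ((range b).filter p).card := by
  rw [range_eq_Ico, range_eq_Ico, ← Finset.Ico_union_Ico_eq_Ico (Nat.zero_le a) hab,
    filter_union,
    card_union_of_disjoint (disjoint_filter_filter (Ico_disjoint_Ico_consecutive 0 a b))]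
  omega

lemma partial_sum (k : ℕ) (hk : 1 ≤ k) (S : ℕ) (hS : Nat.clog 2 k ≤ S) :
    ∑ s ∈ range S, ((min k (2 ^ (s + 1)) : ℕ) : ℝ) / 2 ^ (s + 1)
      = (Nat.clog 2 k : ℝ) + 2 * k / 2 ^ (Nat.clog 2 k) - 1 - k / 2 ^ S := by
  induction S, hS using Nat.le_induction with
  | base =>
    rcases eq_or_lt_of_le hk with h1 | h2
    · simp [← h1]; norm_num
    · have hd : 0 < Nat.clog 2 k := Nat.clog_pos one_lt_two h2
      obtain ⟨D, hD⟩ : ∃ D, Nat.clog 2 k = D + 1 :=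
        ⟨Nat.clog 2 k - 1, (Nat.succ_pred_eq_of_pos hd).symm⟩
      have hpred : 2 ^ D < k := by
        have := Nat.pow_pred_clog_lt_self (b := 2) one_lt_two h2
        simpa [hD] using this
      have hle : k ≤ 2 ^ (D + 1) := by rw [← hD]; exact Nat.le_pow_clog one_lt_two k
      rw [hD, Finset.sum_range_succ]
      have h1 : ∀ s ∈ range D, ((min k (2 ^ (s + 1)) : ℕ) : ℝ) / 2 ^ (s + 1) = 1 := by
        intro s hs
        rw [mem_range] at hs
        have hsp : (2 : ℕ) ^ (s + 1) ≤ 2 ^ D := Nat.pow_le_pow_right (by norm_num) (by omega)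
        rw [show min k (2 ^ (s + 1)) = 2 ^ (s + 1) by omega]
        push_cast
        field_simp
      rw [Finset.sum_congr rfl h1, Finset.sum_const, card_range,
        show min k (2 ^ (D + 1)) = k by omega]
      have h2p : (0 : ℝ) < 2 ^ (D + 1) := by positivity
      push_cast
      field_simp
      ring
  | succ S hS ih =>
    rw [Finset.sum_range_succ, ih]
    have hkS : min k (2 ^ (S + 1)) = k := by
      have h1 : k ≤ 2 ^ Nat.clog 2 k := Nat.le_pow_clog one_lt_two k
      have h2 : (2 : ℕ) ^ Nat.clog 2 k ≤ 2 ^ (S + 1) :=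
        Nat.pow_le_pow_right (by norm_num) (by omega)
      omega
    rw [hkS]
    have h2S : (0 : ℝ) < 2 ^ S := by positivity
    have h2S1 : (0 : ℝ) < 2 ^ (S + 1) := by positivity
    field_simp
    ring

end UmmrAux

/-- The amortized U-MMR membership-proof size of the `k`-th most recent item equals
`d' + 2k/2^d' − 1`, where `d' = ⌈log₂ k⌉`. -/
theorem ummr_amortized_proof_size (k : ℕ) (hk : 1 ≤ k) :
    Tendsto
      (fun N : ℕ => (N : ℝ)⁻¹ * ∑ n ∈ Finset.Ico k (k + N), (ummrHeight k n : ℝ))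
      atTop
      (nhds ((Nat.clog 2 k : ℝ) + 2 * (k : ℝ) / 2 ^ (Nat.clog 2 k) - 1)) := by
  classical
  set L : ℝ := (Nat.clog 2 k : ℝ) + 2 * (k : ℝ) / 2 ^ (Nat.clog 2 k) - 1 with hL
  have hk0 : (0 : ℝ) < k := by exact_mod_cast hk
  -- bound for counts over initial segments
  have hFb : ∀ m M : ℕ, 0 < m →
      |(((Finset.range M).filter (fun n => n % m < k)).card : ℝ)
        - (M : ℝ) * min (k : ℝ) (m : ℝ) / m| ≤ min (k : ℝ) (m : ℝ) := by
    intro m M hm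
    rw [UmmrAux.countF k m hm M]
    have hm0 : (0 : ℝ) < m := by exact_mod_cast hm
    have hc0 : (0 : ℝ) ≤ min (k : ℝ) (m : ℝ) := by positivity
    have hq1 : ((M / m : ℕ) : ℝ) * m ≤ M := by exact_mod_cast Nat.div_mul_le_self M m
    have hq2 : (M : ℝ) < (((M / m : ℕ) : ℝ) + 1) * m := by
      have hn : M < (M / m + 1) * m := by
        calc M = m * (M / m) + M % m := (Nat.div_add_mod M m).symm
        _ < m * (M / m) + m := Nat.add_lt_add_left (Nat.mod_lt M hm) _
        _ = (M / m + 1) * m := by ring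
      exact_mod_cast hn
    have hmnn : min (M % m) k ≤ min k m := by
      have := Nat.mod_lt M hm; omega
    have hmn : min ((M % m : ℕ) : ℝ) (k : ℝ) ≤ min (k : ℝ) (m : ℝ) := by
      exact_mod_cast hmnn
    have hmn0 : (0 : ℝ) ≤ min ((M % m : ℕ) : ℝ) (k : ℝ) := by positivity
    push_cast
    have hx1 : (M : ℝ) * min (k : ℝ) (m : ℝ) / m ≤ (((M / m : ℕ) : ℝ) + 1) * min (k : ℝ) (m : ℝ) := by
      rw [div_le_iff₀ hm0]
      nlinarith [mul_le_mul_of_nonneg_right hq2.le hc0]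
    have hx2 : ((M / m : ℕ) : ℝ) * min (k : ℝ) (m : ℝ) ≤ (M : ℝ) * min (k : ℝ) (m : ℝ) / m := by
      rw [le_div_iff₀ hm0]
      nlinarith [mul_le_mul_of_nonneg_right hq1 hc0]
    rw [abs_le]
    constructor <;> nlinarith [hx1, hx2, hmn, hmn0]
  -- the key quantitative estimate
  have key : ∀ N : ℕ, 1 ≤ N →
      |(∑ n ∈ Finset.Ico k (k + N), (ummrHeight k n : ℝ)) - N * L|
        ≤ 2 * k * (Nat.clog 2 (k + N) : ℝ) + k := by
    intro N hN
    set T := Nat.clog 2 (k + N) with hT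
    have hTk : k + N ≤ 2 ^ T := Nat.le_pow_clog one_lt_two _
    have hTd : Nat.clog 2 k ≤ T := Nat.clog_mono_right 2 (Nat.le_add_right k N)
    have hswap : ∑ n ∈ Finset.Ico k (k + N), ummrHeight k n
        = ∑ s ∈ Finset.range T,
            ((Finset.Ico k (k + N)).filter (fun n => n % 2 ^ (s + 1) < k)).card := by
      have h1 : ∀ n ∈ Finset.Ico k (k + N), ummrHeight k n
          = ((Finset.range T).filter (fun s => n % 2 ^ (s + 1) < k)).card := by
        intro n hn
        rw [Finset.mem_Ico] at hn
        apply UmmrAux.height_eq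
        have h2T : (2 : ℕ) ^ T ≤ 2 ^ (T + 1) := Nat.pow_le_pow_right (by norm_num) (by omega)
        have hlt : n < 2 ^ (T + 1) := by omega
        rw [Nat.mod_eq_of_lt hlt]
        exact hn.1
      rw [Finset.sum_congr rfl h1]
      simp_rw [Finset.card_filter]
      exact Finset.sum_comm
    have hcast : (∑ n ∈ Finset.Ico k (k + N), (ummrHeight k n : ℝ))
        = ∑ s ∈ Finset.range T,
            (((Finset.Ico k (k + N)).filter (fun n => n % 2 ^ (s + 1) < k)).card : ℝ) := by
      exact_mod_cast hswap
    have hB : ∀ s : ℕ,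
        |(((Finset.Ico k (k + N)).filter (fun n => n % 2 ^ (s + 1) < k)).card : ℝ)
          - (N : ℝ) * min (k : ℝ) ((2 : ℝ) ^ (s + 1)) / 2 ^ (s + 1)| ≤ 2 * k := by
      intro s
      have hm : 0 < 2 ^ (s + 1) := Nat.pow_pos (by norm_num)
      have hI := UmmrAux.countIco (fun n => n % 2 ^ (s + 1) < k) k (k + N) (Nat.le_add_right k N)
      have hBr : (((Finset.Ico k (k + N)).filter (fun n => n % 2 ^ (s + 1) < k)).card : ℝ)
          = (((Finset.range (k + N)).filter (fun n => n % 2 ^ (s + 1) < k)).card : ℝ)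
            - (((Finset.range k).filter (fun n => n % 2 ^ (s + 1) < k)).card : ℝ) := by
        have h := congrArg (Nat.cast (R := ℝ)) hI
        push_cast at h
        linarith
      have h1 := hFb (2 ^ (s + 1)) (k + N) hm
      have h2 := hFb (2 ^ (s + 1)) k hm
      push_cast at h1 h2
      have hck : min (k : ℝ) ((2 : ℝ) ^ (s + 1)) ≤ k := min_le_left _ _
      have e : (((Finset.Ico k (k + N)).filter (fun n => n % 2 ^ (s + 1) < k)).card : ℝ)
            - (N : ℝ) * min (k : ℝ) ((2 : ℝ) ^ (s + 1)) / 2 ^ (s + 1)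
          = ((((Finset.range (k + N)).filter (fun n => n % 2 ^ (s + 1) < k)).card : ℝ)
              - ((k : ℝ) + (N : ℝ)) * min (k : ℝ) ((2 : ℝ) ^ (s + 1)) / 2 ^ (s + 1))
            - ((((Finset.range k).filter (fun n => n % 2 ^ (s + 1) < k)).card : ℝ)
              - (k : ℝ) * min (k : ℝ) ((2 : ℝ) ^ (s + 1)) / 2 ^ (s + 1)) := by
        rw [hBr]; ring
      rw [e]
      calc |_ - _| ≤ |(((Finset.range (k + N)).filter (fun n => n % 2 ^ (s + 1) < k)).card : ℝ)
              - ((k : ℝ) + (N : ℝ)) * min (k : ℝ) ((2 : ℝ) ^ (s + 1)) / 2 ^ (s + 1)|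
            + |(((Finset.range k).filter (fun n => n % 2 ^ (s + 1) < k)).card : ℝ)
              - (k : ℝ) * min (k : ℝ) ((2 : ℝ) ^ (s + 1)) / 2 ^ (s + 1)| := abs_sub _ _
      _ ≤ 2 * k := by linarith [h1, h2]
    have hsum1 : |(∑ n ∈ Finset.Ico k (k + N), (ummrHeight k n : ℝ))
        - ∑ s ∈ Finset.range T, (N : ℝ) * min (k : ℝ) ((2 : ℝ) ^ (s + 1)) / 2 ^ (s + 1)|
          ≤ 2 * k * T := by
      rw [hcast, ← Finset.sum_sub_distrib]
      calc |∑ s ∈ Finset.range T,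
            ((((Finset.Ico k (k + N)).filter (fun n => n % 2 ^ (s + 1) < k)).card : ℝ)
              - (N : ℝ) * min (k : ℝ) ((2 : ℝ) ^ (s + 1)) / 2 ^ (s + 1))|
          ≤ ∑ s ∈ Finset.range T,
            |(((Finset.Ico k (k + N)).filter (fun n => n % 2 ^ (s + 1) < k)).card : ℝ)
              - (N : ℝ) * min (k : ℝ) ((2 : ℝ) ^ (s + 1)) / 2 ^ (s + 1)| :=
        Finset.abs_sum_le_sum_abs _ _
      _ ≤ ∑ _s ∈ Finset.range T, 2 * (k : ℝ) := Finset.sum_le_sum (fun s _ => hB s)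
      _ = 2 * k * T := by rw [Finset.sum_const, Finset.card_range, nsmul_eq_mul]; ring
    have hps0 : ∑ s ∈ Finset.range T, min (k : ℝ) ((2 : ℝ) ^ (s + 1)) / 2 ^ (s + 1)
        = (Nat.clog 2 k : ℝ) + 2 * k / 2 ^ (Nat.clog 2 k) - 1 - k / 2 ^ T := by
      rw [← UmmrAux.partial_sum k hk T hTd]
      refine Finset.sum_congr rfl fun s _ => ?_
      push_cast
      ring
    have hps : ∑ s ∈ Finset.range T, (N : ℝ) * min (k : ℝ) ((2 : ℝ) ^ (s + 1)) / 2 ^ (s + 1)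
        = (N : ℝ) * (L - k / 2 ^ T) := by
      simp_rw [mul_div_assoc, ← Finset.mul_sum, hps0]
      rw [hL]
    have hsum1' : |(∑ n ∈ Finset.Ico k (k + N), (ummrHeight k n : ℝ))
        - (N : ℝ) * (L - k / 2 ^ T)| ≤ 2 * k * T := by
      rw [← hps]; exact hsum1
    have hNk : (N : ℝ) * ((k : ℝ) / 2 ^ T) ≤ k := by
      have h2T : (N : ℝ) ≤ 2 ^ T := by exact_mod_cast le_trans (Nat.le_add_left N k) hTk
      have h2T0 : (0 : ℝ) < 2 ^ T := by positivity
      rw [mul_div_assoc', div_le_iff₀ h2T0]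
      nlinarith
    calc |(∑ n ∈ Finset.Ico k (k + N), (ummrHeight k n : ℝ)) - N * L|
        = |((∑ n ∈ Finset.Ico k (k + N), (ummrHeight k n : ℝ))
            - (N : ℝ) * (L - k / 2 ^ T)) + (-((N : ℝ) * ((k : ℝ) / 2 ^ T)))| := by
          congr 1; ring
    _ ≤ |(∑ n ∈ Finset.Ico k (k + N), (ummrHeight k n : ℝ))
            - (N : ℝ) * (L - k / 2 ^ T)| + |-((N : ℝ) * ((k : ℝ) / 2 ^ T))| := abs_add_le _ _
    _ ≤ 2 * k * T + (N : ℝ) * ((k : ℝ) / 2 ^ T) := by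
          rw [abs_neg]
          exact add_le_add hsum1' (le_of_eq (abs_of_nonneg (by positivity)))
    _ ≤ 2 * k * T + k := by linarith
  -- limits
  have hinv : Tendsto (fun N : ℕ => ((N : ℝ))⁻¹) atTop (nhds 0) :=
    tendsto_inv_atTop_nhds_zero_nat
  have hlogdiv : Tendsto (fun N : ℕ => Real.log ((k : ℝ) + N) / N) atTop (nhds 0) := by
    have h1 : Tendsto (fun x : ℝ => Real.log x / x) atTop (nhds 0) :=
      Real.isLittleO_log_id_atTop.tendsto_div_nhds_zero
    have h2 : Tendsto (fun N : ℕ => ((k : ℝ) + N)) atTop atTop :=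
      tendsto_atTop_add_const_left atTop (k : ℝ) tendsto_natCast_atTop_atTop
    have h3 := h1.comp h2
    have h4 : Tendsto (fun N : ℕ => (1 : ℝ) + k * (N : ℝ)⁻¹) atTop (nhds 1) := by
      simpa using (tendsto_const_nhds (x := (1 : ℝ)) (f := atTop)).add (hinv.const_mul (k : ℝ))
    have h5 := h3.mul h4
    rw [zero_mul] at h5
    apply h5.congr'
    filter_upwards [eventually_ge_atTop 1] with N hN
    have hN0 : (0 : ℝ) < N := by exact_mod_cast hN
    have hkN : (0 : ℝ) < (k : ℝ) + N := by positivity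
    show Real.log ((k : ℝ) + N) / ((k : ℝ) + N) * (1 + k * (N : ℝ)⁻¹) = Real.log ((k : ℝ) + N) / N
    field_simp
    ring
  have hclog : Tendsto (fun N : ℕ => (Nat.clog 2 (k + N) : ℝ) / N) atTop (nhds 0) := by
    have hb : Tendsto (fun N : ℕ => (Real.log ((k : ℝ) + N) / Real.log 2 + 1) / N)
        atTop (nhds 0) := by
      have hsum := (hlogdiv.const_mul (Real.log 2)⁻¹).add hinv
      rw [mul_zero, add_zero] at hsum
      apply hsum.congr
      intro N
      ring
    apply squeeze_zero_norm' _ hb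
    filter_upwards [eventually_ge_atTop 1] with N hN
    have hN0 : (0 : ℝ) < N := by exact_mod_cast hN
    have hc1 : 0 < Nat.clog 2 (k + N) := Nat.clog_pos one_lt_two (by omega)
    have hpow : (2 : ℕ) ^ (Nat.clog 2 (k + N) - 1) < k + N :=
      Nat.pow_pred_clog_lt_self one_lt_two (by omega)
    have hlog2 : (0 : ℝ) < Real.log 2 := Real.log_pos (by norm_num)
    have hcle : (Nat.clog 2 (k + N) : ℝ) ≤ Real.log ((k : ℝ) + N) / Real.log 2 + 1 := by
      have hr : (2 : ℝ) ^ (Nat.clog 2 (k + N) - 1) ≤ (k : ℝ) + N := by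
        exact_mod_cast hpow.le
      have hlg : ((Nat.clog 2 (k + N) - 1 : ℕ) : ℝ) * Real.log 2 ≤ Real.log ((k : ℝ) + N) := by
        rw [← Real.log_pow]
        exact Real.log_le_log (by positivity) hr
      have hc' : ((Nat.clog 2 (k + N) - 1 : ℕ) : ℝ) = (Nat.clog 2 (k + N) : ℝ) - 1 := by
        rw [Nat.cast_sub (by omega)]
        norm_num
      rw [hc'] at hlg
      have h6 : (Nat.clog 2 (k + N) : ℝ) - 1 ≤ Real.log ((k : ℝ) + N) / Real.log 2 := by
        rw [le_div_iff₀ hlog2]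
        exact hlg
      linarith
    have hnorm : ‖(Nat.clog 2 (k + N) : ℝ) / N‖ = (Nat.clog 2 (k + N) : ℝ) / N := by
      rw [Real.norm_eq_abs, abs_of_nonneg (by positivity)]
    rw [hnorm]
    gcongr
  have hE : Tendsto (fun N : ℕ => (2 * (k : ℝ) * (Nat.clog 2 (k + N) : ℝ) + k) / N)
      atTop (nhds 0) := by
    have hsum := (hclog.const_mul (2 * (k : ℝ))).add (hinv.const_mul (k : ℝ))
    rw [mul_zero, mul_zero, add_zero] at hsum
    apply hsum.congr
    intro N
    ring
  have hup : ∀ᶠ N : ℕ in atTop,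
      ‖(N : ℝ)⁻¹ * ∑ n ∈ Finset.Ico k (k + N), (ummrHeight k n : ℝ) - L‖
        ≤ (2 * (k : ℝ) * (Nat.clog 2 (k + N) : ℝ) + k) / N := by
    filter_upwards [eventually_ge_atTop 1] with N hN
    have hN0 : (0 : ℝ) < N := by exact_mod_cast hN
    have e : (N : ℝ)⁻¹ * (∑ n ∈ Finset.Ico k (k + N), (ummrHeight k n : ℝ)) - L
        = (N : ℝ)⁻¹ * ((∑ n ∈ Finset.Ico k (k + N), (ummrHeight k n : ℝ)) - N * L) := by
      field_simp
    rw [Real.norm_eq_abs, e, abs_mul, abs_inv, Nat.abs_cast]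
    calc (N : ℝ)⁻¹ * |(∑ n ∈ Finset.Ico k (k + N), (ummrHeight k n : ℝ)) - N * L|
        ≤ (N : ℝ)⁻¹ * (2 * k * (Nat.clog 2 (k + N) : ℝ) + k) :=
          mul_le_mul_of_nonneg_left (key N hN) (by positivity)
    _ = (2 * (k : ℝ) * (Nat.clog 2 (k + N) : ℝ) + k) / N := by rw [inv_mul_eq_div]
  have h0 := squeeze_zero_norm' hup hE
  have h1 := h0.add_const L
  rw [zero_add] at h1
  apply h1.congr
  intro N
  ring
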